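/- arXiv:1403.4428 — 3 statements merged into one kernel-verified Lean document; each statement's English description precedes it below -/
import Mathlib

section
/- Let A be an n×n complex matrix that is diagonalizable, A = F Λ F⁻¹ with Λ = diag(λ₁,…,λₙ); denote by f_i the i-th column of F and by w_i* the i-th row of W = F⁻¹. Let σ ∈ ℂ, let b ∈ ℂⁿ, let x⁽σ⁾ solve (A+σI)x⁽σ⁾ = b, and let x̂₀ ∈ ℂⁿ be any approximation. Expand the error as x⁽σ⁾ − x̂₀ = Σ_{i=1}^n φ_i f_i, let 𝕀 ⊊ {1,…,n} be an index set, set x̄₀ so that x⁽σ⁾ − x̄₀ = Σ_{i∉𝕀} φ_i f_i, and set r̂₀ = (A+σI)(x⁽σ⁾ − x̂₀), r̄₀ = (A+σI)(x⁽σ⁾ − x̄₀). Then for every ℓ ≥ 0 and every polynomial p of degree at most ℓ with p(0) = 1, the minimum of ‖q(A+σI) r̂₀‖₂ over all polynomials q of degree at most ℓ with q(0) = 1 satisfies: min_q ‖q(A+σI) r̂₀‖₂ ≤ ‖p(A+σI) r̄₀‖₂ + ‖Σ_{i∈𝕀} (λ_i+σ) p(λ_i+σ) φ_i f_i‖₂.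 In particular, taking p to be the GMRES residual polynomial p̄_ℓ for starting residual r̄₀ gives ‖r̂_ℓ‖₂ ≤ ‖r̄_ℓ‖₂ + δ with δ = ‖Σ_{i∈𝕀}(λ_i+σ) p̄_ℓ(λ_i+σ) φ_i f_i‖₂. -/
open Matrix Polynomial

/-- Euclidean (2-) norm of a complex vector. -/
noncomputable def enorm2 {ι : Type*} [Fintype ι] (v : ι → ℂ) : ℝ :=
  ‖(WithLp.equiv 2 (ι → ℂ)).symm v‖

lemma pow_mulVec_eig {n : ℕ} (M : Matrix (Fin n) (Fin n) ℂ) (v : Fin n → ℂ) (μ : ℂ)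
    (hv : M.mulVec v = μ • v) (k : ℕ) : (M ^ k).mulVec v = μ ^ k • v := by
  induction k with
  | zero => simp [Matrix.one_mulVec]
  | succ k ih =>
      rw [pow_succ, ← Matrix.mulVec_mulVec, hv, Matrix.mulVec_smul, ih, pow_succ,
        smul_smul, mul_comm]

lemma aeval_mulVec_eig {n : ℕ} (M : Matrix (Fin n) (Fin n) ℂ) (v : Fin n → ℂ) (μ : ℂ)
    (hv : M.mulVec v = μ • v) (q : Polynomial ℂ) :
    ((Polynomial.aeval M q).mulVec v) = q.eval μ • v := by
  induction q using Polynomial.induction_on' with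
  | add p q hp hq =>
      rw [map_add, Matrix.add_mulVec, hp, hq, Polynomial.eval_add, add_smul]
  | monomial k c =>
      rw [Polynomial.aeval_monomial, Polynomial.eval_monomial,
        Algebra.algebraMap_eq_smul_one, smul_mul_assoc, one_mul,
        Matrix.smul_mulVec, pow_mulVec_eig M v μ hv k, smul_smul]

lemma enorm2_add_le {ι : Type*} [Fintype ι] (x y : ι → ℂ) :
    enorm2 (x + y) ≤ enorm2 x + enorm2 y := by
  unfold enorm2
  rw [show (WithLp.equiv 2 (ι → ℂ)).symm (x + y) = (WithLp.equiv 2 (ι → ℂ)).symm x + (WithLp.equiv 2 (ι → ℂ)).symm y from rfl]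
  exact norm_add_le _ _

/-- Let `A = F Λ W` be diagonalizable (`W = F⁻¹`), `f_i` the columns
of `F`.  Let `(A+σI) x⁽σ⁾ = b`, let `x̂₀` be any approximation with error expansion
`x⁽σ⁾ − x̂₀ = Σ_i φ_i f_i`, let `𝕀 ⊊ {1,…,n}`, let `x̄₀` satisfy
`x⁽σ⁾ − x̄₀ = Σ_{i∉𝕀} φ_i f_i`, and set `r̂₀ = (A+σI)(x⁽σ⁾ − x̂₀)`,
`r̄₀ = (A+σI)(x⁽σ⁾ − x̄₀)`.  Then for every `ℓ ≥ 0` and every polynomial `p` with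
`deg p ≤ ℓ` and `p(0) = 1`,
`min_{q : deg q ≤ ℓ, q(0)=1} ‖q(A+σI) r̂₀‖₂
   ≤ ‖p(A+σI) r̄₀‖₂ + ‖Σ_{i∈𝕀} (λ_i+σ) p(λ_i+σ) φ_i f_i‖₂`.
(The GMRES residual after `ℓ` steps with initial residual `r̂₀` has norm equal to the
left-hand side; taking `p` to be the GMRES residual polynomial for `r̄₀` gives
`‖r̂_ℓ‖ ≤ ‖r̄_ℓ‖ + δ`.) -/
theorem gmres_shifted_seed_projection_bound {n : ℕ}
    (A F W : Matrix (Fin n) (Fin n) ℂ) (Λ : Fin n → ℂ)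
    (hFW : F * W = 1) (hWF : W * F = 1)
    (hA : A = F * Matrix.diagonal Λ * W)
    (σ : ℂ) (b xσ : Fin n → ℂ)
    (hxσ : (A + σ • (1 : Matrix (Fin n) (Fin n) ℂ)).mulVec xσ = b)
    (xhat₀ : Fin n → ℂ) (φ : Fin n → ℂ)
    (hφ : xσ - xhat₀ = ∑ i : Fin n, φ i • (fun j => F j i))
    (I : Finset (Fin n)) (hI : I ⊂ Finset.univ)
    (xbar₀ : Fin n → ℂ)
    (hxbar : xσ - xbar₀ = ∑ i ∈ Iᶜ, φ i • (fun j => F j i))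
    (rhat₀ rbar₀ : Fin n → ℂ)
    (hrhat : rhat₀ = (A + σ • (1 : Matrix (Fin n) (Fin n) ℂ)).mulVec (xσ - xhat₀))
    (hrbar : rbar₀ = (A + σ • (1 : Matrix (Fin n) (Fin n) ℂ)).mulVec (xσ - xbar₀)) :
    ∀ (ℓ : ℕ) (p : Polynomial ℂ), p.natDegree ≤ ℓ → p.eval 0 = 1 →
      sInf {t : ℝ | ∃ q : Polynomial ℂ, q.natDegree ≤ ℓ ∧ q.eval 0 = 1 ∧
              t = enorm2 ((Polynomial.aeval
                    (A + σ • (1 : Matrix (Fin n) (Fin n) ℂ)) q).mulVec rhat₀)} ≤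
        enorm2 ((Polynomial.aeval
            (A + σ • (1 : Matrix (Fin n) (Fin n) ℂ)) p).mulVec rbar₀) +
          enorm2 (∑ i ∈ I, ((Λ i + σ) * p.eval (Λ i + σ) * φ i) • (fun j => F j i)) := by
  intro ℓ p hpdeg hp0
  set M : Matrix (Fin n) (Fin n) ℂ := A + σ • (1 : Matrix (Fin n) (Fin n) ℂ) with hM
  -- columns of F are eigenvectors of M
  have hfcol : ∀ i : Fin n, (fun j => F j i) = F.mulVec (Pi.single i 1) := by
    intro i; rw [Matrix.mulVec_single]; funext j; simp
  have heig : ∀ i : Fin n, M.mulVec (fun j => F j i) = (Λ i + σ) • (fun j => F j i) := by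
    intro i
    rw [hfcol i, Matrix.mulVec_mulVec]
    have : M * F = F * Matrix.diagonal (fun i => Λ i + σ) := by
      have hdia : Matrix.diagonal (fun i => Λ i + σ)
          = Matrix.diagonal Λ + σ • (1 : Matrix (Fin n) (Fin n) ℂ) := by
        ext i j
        rcases eq_or_ne i j with h | h <;>
          simp [Matrix.diagonal_apply, Matrix.one_apply, h]
      rw [hM, hA, Matrix.add_mul, Matrix.mul_assoc (F * Matrix.diagonal Λ) W F, hWF,
        Matrix.mul_one, hdia, Matrix.mul_add]
      congr 1
      rw [Matrix.mul_smul, Matrix.smul_mul, Matrix.mul_one, Matrix.one_mul]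
    rw [this, ← Matrix.mulVec_mulVec, Matrix.diagonal_mulVec_single, ← smul_eq_mul,
      Pi.single_smul, Matrix.mulVec_smul]
  -- residual decomposition
  have hsplit : xσ - xhat₀ = (xσ - xbar₀) + ∑ i ∈ I, φ i • (fun j => F j i) := by
    rw [hφ, hxbar, ← Finset.sum_compl_add_sum I (fun i => φ i • (fun j => F j i))]
  have hkey : (Polynomial.aeval M p).mulVec rhat₀
      = (Polynomial.aeval M p).mulVec rbar₀
        + ∑ i ∈ I, ((Λ i + σ) * p.eval (Λ i + σ) * φ i) • (fun j => F j i) := by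
    rw [hrhat, hrbar, hsplit, Matrix.mulVec_add, Matrix.mulVec_add]
    congr 1
    simp only [← Matrix.mulVecLin_apply, map_sum]
    simp only [Matrix.mulVecLin_apply]
    refine Finset.sum_congr rfl (fun i _ => ?_)
    rw [Matrix.mulVec_smul, heig i, Matrix.mulVec_smul, Matrix.mulVec_smul, aeval_mulVec_eig M _ _ (heig i) p,
      smul_smul, smul_smul]
    congr 1
    ring
  -- the sInf is at most the value attained by q = p
  have hmem : enorm2 ((Polynomial.aeval M p).mulVec rhat₀)
      ∈ {t : ℝ | ∃ q : Polynomial ℂ, q.natDegree ≤ ℓ ∧ q.eval 0 = 1 ∧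
          t = enorm2 ((Polynomial.aeval M q).mulVec rhat₀)} :=
    ⟨p, hpdeg, hp0, rfl⟩
  have hbdd : BddBelow {t : ℝ | ∃ q : Polynomial ℂ, q.natDegree ≤ ℓ ∧ q.eval 0 = 1 ∧
      t = enorm2 ((Polynomial.aeval M q).mulVec rhat₀)} := by
    refine ⟨0, fun t ht => ?_⟩
    obtain ⟨q, -, -, rfl⟩ := ht
    exact norm_nonneg _
  refine le_trans (csInf_le hbdd hmem) ?_
  rw [hkey]
  exact enorm2_add_le _ _
end

section
/- Let A be an n×n complex matrix, let U be an n×k matrix, set C = A U, and suppose C has orthonormal columns. Let V_{m+1} be an n×(m+1) matrix whose first m columns form V_m, let H̄_m be an (m+1)×m matrix with (I − C C*) A V_m = V_{m+1} H̄_m, and set B_m = C* A V_m. Then for every σ ∈ ℂ, (A + σI) [U V_m] = [ (C + σU) (C B_m + V_{m+1} H̄_m + σ V_m) ], where [U V_m] denotes the n×(k+m) matrix formed by concatenating the columns of U and V_m. -/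
open Matrix

/-- Let `C = A U` have orthonormal columns, let `V_{m+1}` have first
`m` columns `V_m`, suppose `(I − C C*) A V_m = V_{m+1} H̄_m`, and set `B_m = C* A V_m`.
Then for every `σ ∈ ℂ`,
`(A + σI) [U  V_m] = [ (C + σU)  (C B_m + V_{m+1} H̄_m + σ V_m) ]`. -/
theorem shifted_augmented_identity {n k m : ℕ}
    (A : Matrix (Fin n) (Fin n) ℂ)
    (U : Matrix (Fin n) (Fin k) ℂ)
    (C : Matrix (Fin n) (Fin k) ℂ)
    (hC : C = A * U)
    (hCorth : Cᴴ * C = 1)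
    (V₁ : Matrix (Fin n) (Fin (m + 1)) ℂ)
    (Vm : Matrix (Fin n) (Fin m) ℂ)
    (hV : Vm = V₁.submatrix id Fin.castSucc)
    (H : Matrix (Fin (m + 1)) (Fin m) ℂ)
    (hArnoldi : ((1 : Matrix (Fin n) (Fin n) ℂ) - C * Cᴴ) * (A * Vm) = V₁ * H)
    (Bm : Matrix (Fin k) (Fin m) ℂ)
    (hB : Bm = Cᴴ * (A * Vm))
    (σ : ℂ) :
    (A + σ • (1 : Matrix (Fin n) (Fin n) ℂ)) * fromCols U Vm =
      fromCols (C + σ • U) (C * Bm + V₁ * H + σ • Vm) := by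
  have hAVm : A * Vm = C * Bm + V₁ * H := by
    rw [← hArnoldi, hB, Matrix.sub_mul, Matrix.one_mul, Matrix.mul_assoc]
    abel
  rw [Matrix.add_mul, Matrix.mul_fromCols, Matrix.smul_mul, Matrix.one_mul, hAVm, ← hC]
  ext i j
  cases j <;> simp [Matrix.fromCols] <;> ring
end

section
/- Let A and M be n×n complex matrices with M invertible, and let A_p = A M⁻¹ and A_p⁽σ⁾ = (A + σI) M⁻¹ for σ ∈ ℂ. Let U be n×k, C = A_p U, V_{m+1} be n×(m+1) with first m columns V_m, and suppose the augmented Arnoldi relation A_p [U V_m] = [C V_{m+1}] Ḡ_m holds with [C V_{m+1}] having orthonormal columns, where Ḡ_m is (k+m+1)×(k+m). Set Z_U = M⁻¹U and Z_m = M⁻¹V_m. Then A_p⁽σ⁾ [U V_m] = [C V_{m+1}] Ḡ_m + σ [Z_U Z_m], and N_m⁽σ⁾ = (A_p⁽σ⁾[U V_m])* (A_p⁽σ⁾[U V_m]) = Ḡ_m* Ḡ_m + |σ|² [[Z_U*Z_U, Z_U*Z_m],[Z_m*Z_U, Z_m*Z_m]] + σ Ḡ_m* [[C*Z_U, C*Z_m],[V_{m+1}*Z_U,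 V_{m+1}*Z_m]] + σ̄ [[Z_U*C, Z_U*V_{m+1}],[Z_m*C, Z_m*V_{m+1}]] Ḡ_m. -/
open Matrix

/-- With `A_p = A M⁻¹`, `A_p⁽σ⁾ = (A + σI) M⁻¹`, `C = A_p U`, the
augmented Arnoldi relation `A_p [U  V_m] = [C  V_{m+1}] Ḡ_m` where `[C  V_{m+1}]` has
orthonormal columns, `Z_U = M⁻¹U` and `Z_m = M⁻¹V_m`, we have
`A_p⁽σ⁾ [U  V_m] = [C  V_{m+1}] Ḡ_m + σ [Z_U  Z_m]` and
`N_m⁽σ⁾ = Ḡ_m* Ḡ_m + |σ|² [[Z_U*Z_U, Z_U*Z_m],[Z_m*Z_U, Z_m*Z_m]]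
  + σ Ḡ_m* [[C*Z_U, C*Z_m],[V_{m+1}*Z_U, V_{m+1}*Z_m]]
  + σ̄ [[Z_U*C, Z_U*V_{m+1}],[Z_m*C, Z_m*V_{m+1}]] Ḡ_m`. -/
theorem preconditioned_shifted_augmented_arnoldi {n k m : ℕ}
    (A M : Matrix (Fin n) (Fin n) ℂ) (hM : Invertible M)
    (σ : ℂ)
    (U : Matrix (Fin n) (Fin k) ℂ)
    (C : Matrix (Fin n) (Fin k) ℂ)
    (hC : C = A * M⁻¹ * U)
    (V₁ : Matrix (Fin n) (Fin (m + 1)) ℂ)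
    (Vm : Matrix (Fin n) (Fin m) ℂ)
    (hV : Vm = V₁.submatrix id Fin.castSucc)
    (G : Matrix (Fin k ⊕ Fin (m + 1)) (Fin k ⊕ Fin m) ℂ)
    (hArnoldi : A * M⁻¹ * fromCols U Vm = fromCols C V₁ * G)
    (hOrth : (fromCols C V₁)ᴴ * fromCols C V₁ = 1)
    (Zu : Matrix (Fin n) (Fin k) ℂ) (hZu : Zu = M⁻¹ * U)
    (Zm : Matrix (Fin n) (Fin m) ℂ) (hZm : Zm = M⁻¹ * Vm) :
    (A + σ • (1 : Matrix (Fin n) (Fin n) ℂ)) * M⁻¹ * fromCols U Vm =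
        fromCols C V₁ * G + σ • fromCols Zu Zm ∧
      ((A + σ • (1 : Matrix (Fin n) (Fin n) ℂ)) * M⁻¹ * fromCols U Vm)ᴴ *
          ((A + σ • (1 : Matrix (Fin n) (Fin n) ℂ)) * M⁻¹ * fromCols U Vm) =
        Gᴴ * G +
          (σ * starRingEnd ℂ σ) •
            fromBlocks (Zuᴴ * Zu) (Zuᴴ * Zm) (Zmᴴ * Zu) (Zmᴴ * Zm) +
          σ • (Gᴴ * fromBlocks (Cᴴ * Zu) (Cᴴ * Zm) (V₁ᴴ * Zu) (V₁ᴴ * Zm)) +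
          (starRingEnd ℂ σ) •
            (fromBlocks (Zuᴴ * C) (Zuᴴ * V₁) (Zmᴴ * C) (Zmᴴ * V₁) * G) := by
  have hQ : M⁻¹ * fromCols U Vm = fromCols Zu Zm := by
    rw [mul_fromCols, hZu, hZm]
  have key : (A + σ • (1 : Matrix (Fin n) (Fin n) ℂ)) * M⁻¹ * fromCols U Vm =
      fromCols C V₁ * G + σ • fromCols Zu Zm := by
    rw [add_mul, Matrix.add_mul, hArnoldi, smul_mul_assoc, one_mul, Matrix.smul_mul, hQ]
  refine ⟨key, ?_⟩
  rw [key]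
  have hXY : (fromCols C V₁)ᴴ * fromCols Zu Zm =
      fromBlocks (Cᴴ * Zu) (Cᴴ * Zm) (V₁ᴴ * Zu) (V₁ᴴ * Zm) := by
    rw [conjTranspose_fromCols_eq_fromRows_conjTranspose, fromRows_mul_fromCols]
  have hYX : (fromCols Zu Zm)ᴴ * fromCols C V₁ =
      fromBlocks (Zuᴴ * C) (Zuᴴ * V₁) (Zmᴴ * C) (Zmᴴ * V₁) := by
    rw [conjTranspose_fromCols_eq_fromRows_conjTranspose, fromRows_mul_fromCols]
  have hYY : (fromCols Zu Zm)ᴴ * fromCols Zu Zm =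
      fromBlocks (Zuᴴ * Zu) (Zuᴴ * Zm) (Zmᴴ * Zu) (Zmᴴ * Zm) := by
    rw [conjTranspose_fromCols_eq_fromRows_conjTranspose, fromRows_mul_fromCols]
  rw [conjTranspose_add, conjTranspose_smul, conjTranspose_mul,
    Matrix.add_mul, Matrix.mul_add, Matrix.mul_add, Matrix.mul_smul, Matrix.mul_smul,
    Matrix.smul_mul, Matrix.smul_mul,
    Matrix.mul_assoc Gᴴ (fromCols C V₁)ᴴ (fromCols C V₁ * G),
    ← Matrix.mul_assoc (fromCols C V₁)ᴴ, hOrth, Matrix.one_mul,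
    Matrix.mul_assoc Gᴴ (fromCols C V₁)ᴴ, hXY,
    ← Matrix.mul_assoc (fromCols Zu Zm)ᴴ, hYX, hYY, smul_smul]
  simp only [starRingEnd_apply]
  abel
end
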